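/- For all indices 1 ≤ i, j ≤ n, writing pᵢⱼ := ∂²p/∂xᵢ∂xⱼ, the following bracket identity holds among derivations of A: [νᵢ, νⱼ'] = pᵢⱼ·H + Δᵢⱼ, where pᵢⱼ·H denotes the derivation g ↦ pᵢⱼ·H(g). -/

import Mathlib

/-!
Danielewski setup: `A = ℂ[u, v, x₁, …, xₙ] = MvPolynomial (Fin 2 ⊕ Fin n) ℂ`,
with `u = X (Sum.inl 0)`, `v = X (Sum.inl 1)`, `xₖ = X (Sum.inr k)`.
-/

open MvPolynomial

noncomputable section

/-- The coordinate ring `ℂ[u, v, x₁, …, xₙ]`. -/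
abbrev DanA (n : ℕ) := MvPolynomial (Fin 2 ⊕ Fin n) ℂ

/-- The variable `u`. -/
def Uvar (n : ℕ) : DanA n := X (Sum.inl 0)

/-- The variable `v`. -/
def Vvar (n : ℕ) : DanA n := X (Sum.inl 1)

/-- `νᵢ = u·∂/∂xᵢ + pᵢ·∂/∂v` : `u ↦ 0`, `v ↦ pᵢ`, `xₖ ↦ δᵢₖ·u`. -/
def nuD {n : ℕ} (p : DanA n) (i : Fin n) : Derivation ℂ (DanA n) (DanA n) :=
  mkDerivation ℂ (Sum.elim
    (fun j : Fin 2 => if j = 0 then 0 else pderiv (Sum.inr i) p)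
    (fun k : Fin n => if k = i then X (Sum.inl 0) else 0))

/-- `νᵢ' = v·∂/∂xᵢ + pᵢ·∂/∂u` : `u ↦ pᵢ`, `v ↦ 0`, `xₖ ↦ δᵢₖ·v`. -/
def nuD' {n : ℕ} (p : DanA n) (i : Fin n) : Derivation ℂ (DanA n) (DanA n) :=
  mkDerivation ℂ (Sum.elim
    (fun j : Fin 2 => if j = 0 then pderiv (Sum.inr i) p else 0)
    (fun k : Fin n => if k = i then X (Sum.inl 1) else 0))

/-- `H = u·∂/∂u − v·∂/∂v` : `u ↦ u`, `v ↦ −v`, `xₖ ↦ 0`. -/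
def HD (n : ℕ) : Derivation ℂ (DanA n) (DanA n) :=
  mkDerivation ℂ (Sum.elim
    (fun j : Fin 2 => if j = 0 then X (Sum.inl 0) else - X (Sum.inl 1))
    (fun _ : Fin n => 0))

/-- `Δᵢⱼ = pᵢ·∂/∂xⱼ − pⱼ·∂/∂xᵢ` : `u, v ↦ 0`, `xₖ ↦ δⱼₖ·pᵢ − δᵢₖ·pⱼ`. -/
def DeltaD {n : ℕ} (p : DanA n) (i j : Fin n) : Derivation ℂ (DanA n) (DanA n) :=
  mkDerivation ℂ (Sum.elim
    (fun _ : Fin 2 => 0)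
    (fun k : Fin n => (if k = j then pderiv (Sum.inr i) p else 0)
      - (if k = i then pderiv (Sum.inr j) p else 0)))


theorem my_pderiv_comm {σ R : Type*} [CommSemiring R] (i j : σ) (f : MvPolynomial σ R) :
    pderiv i (pderiv j f) = pderiv j (pderiv i f) := by
  classical
  induction f using MvPolynomial.induction_on' with
  | add f g hf hg => simp [map_add, hf, hg]
  | monomial s a =>
    rcases eq_or_ne i j with rfl | hne
    · rfl
    · simp only [pderiv_monomial]
      have h1 : ((s - Finsupp.single j 1 : (σ →₀ ℕ))) i = s i := by
        simp [Finsupp.tsub_apply, Finsupp.single_apply, (Ne.symm hne)]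
      have h2 : ((s - Finsupp.single i 1 : (σ →₀ ℕ))) j = s j := by
        simp [Finsupp.tsub_apply, Finsupp.single_apply, hne]
      rw [h1, h2, tsub_right_comm]
      ring_nf

theorem nuD_eq {n : ℕ} (p : DanA n) (i : Fin n) :
    nuD p i = (X (Sum.inl 0) : DanA n) • (pderiv (Sum.inr i)) +
      (pderiv (Sum.inr i) p) • (pderiv (Sum.inl 1)) := by
  apply derivation_ext
  rintro (k | k)
  · fin_cases k <;>
      simp [nuD, mkDerivation_X, Derivation.add_apply, Derivation.smul_apply,
        pderiv_X, Pi.single_apply]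
  · by_cases h : k = i <;>
      simp [nuD, mkDerivation_X, Derivation.add_apply, Derivation.smul_apply,
        pderiv_X, Pi.single_apply, h]

theorem nuD'_eq {n : ℕ} (p : DanA n) (i : Fin n) :
    nuD' p i = (X (Sum.inl 1) : DanA n) • (pderiv (Sum.inr i)) +
      (pderiv (Sum.inr i) p) • (pderiv (Sum.inl 0)) := by
  apply derivation_ext
  rintro (k | k)
  · fin_cases k <;>
      simp [nuD', mkDerivation_X, Derivation.add_apply, Derivation.smul_apply,
        pderiv_X, Pi.single_apply]
  · by_cases h : k = i <;>
      simp [nuD', mkDerivation_X, Derivation.add_apply, Derivation.smul_apply,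
        pderiv_X, Pi.single_apply, h]

/-- `[νᵢ, νⱼ'] = pᵢⱼ·H + Δᵢⱼ`, where `pᵢⱼ = ∂²p/∂xᵢ∂xⱼ`. -/
theorem stmt2 (n : ℕ) (hn : 0 < n) (p : DanA n)
    (hp : p ∈ supported ℂ (Set.range (Sum.inr : Fin n → Fin 2 ⊕ Fin n)))
    (i j : Fin n) :
    ⁅nuD p i, nuD' p j⁆ =
      (pderiv (Sum.inr j) (pderiv (Sum.inr i) p)) • HD n + DeltaD p i j := by
  have hpl : ∀ k : Fin 2, pderiv (Sum.inl k) p = 0 := by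
    intro k
    apply pderiv_eq_zero_of_notMem_vars
    intro hk
    rcases Set.mem_range.1 (mem_supported.1 hp hk) with ⟨m, hm⟩
    exact absurd hm (by simp)
  have hpl2 : ∀ (k : Fin 2) (m : Fin n),
      pderiv (Sum.inl k) (pderiv (Sum.inr m) p) = 0 := by
    intro k m
    rw [my_pderiv_comm, hpl, map_zero]
  apply derivation_ext
  rintro (k | k)
  · fin_cases k <;>
    · rw [Derivation.commutator_apply, nuD_eq, nuD'_eq]
      simp only [Derivation.add_apply, Derivation.smul_apply, smul_eq_mul, map_add, map_mul,
        HD, DeltaD, nuD, nuD', mkDerivation_X, pderiv_X, Pi.single_apply, Sum.elim_inl,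
        Sum.elim_inr, hpl, hpl2]
      simp [my_pderiv_comm (Sum.inr i) (Sum.inr j) p, hpl2]
      ring
  · rw [Derivation.commutator_apply, nuD_eq, nuD'_eq]
    simp only [Derivation.add_apply, Derivation.smul_apply, smul_eq_mul, map_add, map_mul,
      HD, DeltaD, nuD, nuD', mkDerivation_X, pderiv_X, Pi.single_apply, Sum.elim_inl,
      Sum.elim_inr, hpl, hpl2]
    by_cases hkj : k = j <;> by_cases hki : k = i <;>
      simp [hkj, hki, pderiv_X, Pi.single_apply] <;>
      split_ifs <;> simp [pderiv_X, Pi.single_apply]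

end
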